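/- Let γ₁ ≤ γ₂ be integers, n₁, n₂ ∈ ℚ_p, and let a ∈ ℚ_p satisfy |1 − a|_p ≤ p^{-1}. Then there exists b ∈ ℚ_p with |p^{γ₁} b − n₁(1−a)|_p ≤ p^{-1} and |p^{γ₂} b − n₂(1−a)|_p ≤ p^{-1} if and only if |(p^{-γ₁} n₁ − p^{-γ₂} n₂)(1−a)|_p ≤ p^{γ₂−1}; and in that case the set of all such b is exactly the ball {b ∈ ℚ_p : |b − p^{-γ₁} n₁ (1−a)|_p ≤ p^{γ₁−1}}. -/

import Mathlib

private lemma key_7 (p : ℕ) [Fact p.Prime] (γ : ℤ) (m b : ℚ_[p]) :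
    ‖(p : ℚ_[p]) ^ γ * b - m‖ ≤ (p : ℝ) ^ (-1 : ℤ) ↔
      ‖b - (p : ℚ_[p]) ^ (-γ) * m‖ ≤ (p : ℝ) ^ (γ - 1) := by
  have hp : (p : ℚ_[p]) ≠ 0 := by exact_mod_cast (Fact.out : p.Prime).ne_zero
  have h1 : (p : ℚ_[p]) ^ γ * (b - (p : ℚ_[p]) ^ (-γ) * m) = (p : ℚ_[p]) ^ γ * b - m := by
    rw [mul_sub, ← mul_assoc, ← zpow_add₀ hp]; simp
  have hppos : (0 : ℝ) < p := by exact_mod_cast (Fact.out : p.Prime).pos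
  rw [← h1, norm_mul, Padic.norm_p_zpow,
    show (-1 : ℤ) = -γ + (γ - 1) by ring, zpow_add₀ (ne_of_gt hppos)]
  exact mul_le_mul_iff_right₀ (zpow_pos hppos _)

private lemma ultra_7 (p : ℕ) [Fact p.Prime] (x y : ℚ_[p]) :
    ‖x - y‖ ≤ max ‖x‖ ‖y‖ := by
  simpa [sub_eq_add_neg] using Padic.nonarchimedean x (-y)

theorem stmt_7 (p : ℕ) [Fact p.Prime] (γ₁ γ₂ : ℤ) (hγ : γ₁ ≤ γ₂) (n₁ n₂ : ℚ_[p])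
    (a : ℚ_[p]) (ha : ‖1 - a‖ ≤ (p : ℝ) ^ (-1 : ℤ)) :
    ((∃ b : ℚ_[p], ‖(p : ℚ_[p]) ^ γ₁ * b - n₁ * (1 - a)‖ ≤ (p : ℝ) ^ (-1 : ℤ) ∧
        ‖(p : ℚ_[p]) ^ γ₂ * b - n₂ * (1 - a)‖ ≤ (p : ℝ) ^ (-1 : ℤ)) ↔
      ‖((p : ℚ_[p]) ^ (-γ₁) * n₁ - (p : ℚ_[p]) ^ (-γ₂) * n₂) * (1 - a)‖ ≤ (p : ℝ) ^ (γ₂ - 1)) ∧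
    (‖((p : ℚ_[p]) ^ (-γ₁) * n₁ - (p : ℚ_[p]) ^ (-γ₂) * n₂) * (1 - a)‖ ≤ (p : ℝ) ^ (γ₂ - 1) →
      {b : ℚ_[p] | ‖(p : ℚ_[p]) ^ γ₁ * b - n₁ * (1 - a)‖ ≤ (p : ℝ) ^ (-1 : ℤ) ∧
          ‖(p : ℚ_[p]) ^ γ₂ * b - n₂ * (1 - a)‖ ≤ (p : ℝ) ^ (-1 : ℤ)} =
        {b : ℚ_[p] | ‖b - (p : ℚ_[p]) ^ (-γ₁) * n₁ * (1 - a)‖ ≤ (p : ℝ) ^ (γ₁ - 1)}) := by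
  have hp1 : (1 : ℝ) ≤ p := by exact_mod_cast (Fact.out : p.Prime).one_lt.le
  have hmono : (p : ℝ) ^ (γ₁ - 1) ≤ (p : ℝ) ^ (γ₂ - 1) :=
    zpow_le_zpow_right₀ hp1 (by omega)
  set c₁ : ℚ_[p] := (p : ℚ_[p]) ^ (-γ₁) * (n₁ * (1 - a)) with hc₁
  set c₂ : ℚ_[p] := (p : ℚ_[p]) ^ (-γ₂) * (n₂ * (1 - a)) with hc₂
  have hdiff : ((p : ℚ_[p]) ^ (-γ₁) * n₁ - (p : ℚ_[p]) ^ (-γ₂) * n₂) * (1 - a) = c₁ - c₂ := by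
    rw [hc₁, hc₂]; ring
  -- helper: b satisfies first ball and center distance condition ⟹ second ball
  have hstep : ∀ b : ℚ_[p], ‖b - c₁‖ ≤ (p : ℝ) ^ (γ₁ - 1) →
      ‖c₁ - c₂‖ ≤ (p : ℝ) ^ (γ₂ - 1) → ‖b - c₂‖ ≤ (p : ℝ) ^ (γ₂ - 1) := by
    intro b h1 h2
    have : ‖b - c₂‖ ≤ max ‖b - c₁‖ ‖c₁ - c₂‖ := by
      have := Padic.nonarchimedean (b - c₁) (c₁ - c₂)
      simpa using this
    exact this.trans (max_le (h1.trans hmono) h2)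
  constructor
  · constructor
    · rintro ⟨b, hb1, hb2⟩
      rw [key_7] at hb1 hb2
      rw [hdiff]
      have e : c₁ - c₂ = (c₁ - b) + (b - c₂) := by ring
      rw [e]
      exact (Padic.nonarchimedean _ _).trans
        (max_le (by rw [norm_sub_rev]; exact hb1.trans hmono) hb2)
    · intro h
      rw [hdiff] at h
      refine ⟨c₁, ?_, ?_⟩
      · rw [key_7, sub_self, norm_zero]
        positivity
      · rw [key_7]
        exact hstep c₁ (by rw [sub_self, norm_zero]; positivity) h
  · intro h
    rw [hdiff] at h
    ext b
    simp only [Set.mem_setOf_eq, key_7, ← mul_assoc]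
    rw [mul_assoc ((p : ℚ_[p]) ^ (-γ₁)), mul_assoc ((p : ℚ_[p]) ^ (-γ₂))]
    exact ⟨fun ⟨h1, _⟩ => h1, fun h1 => ⟨h1, hstep b h1 h⟩⟩
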